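/- Let f: R^n → R with coordinate-wise Lipschitz constant L_i for ∇_i f, let x ∈ [l,u], γ ≥ 0, and i ∈ {1,…,n}. Then f(x − s·sign(∇_i f(x)) e_i) ≤ f(x) − γ s² for all s with 0 ≤ s ≤ 2|∇_i f(x)| / (L_i + 2γ) such that x − s·sign(∇_i f(x)) e_i ∈ [l,u]. -/

import Mathlib

open scoped RealInnerProductSpace

/-- The box `[l, u]` in `ℝⁿ`. -/
def Box {n : ℕ} (l u : EuclideanSpace ℝ (Fin n)) : Set (EuclideanSpace ℝ (Fin n)) :=
  {y | ∀ j, l j ≤ y j ∧ y j ≤ u j}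

set_option maxHeartbeats 2000000 in
theorem stmt1 {n : ℕ} (f : EuclideanSpace ℝ (Fin n) → ℝ)
    (g : EuclideanSpace ℝ (Fin n) → EuclideanSpace ℝ (Fin n))
    (l u x : EuclideanSpace ℝ (Fin n)) (i : Fin n) (Li γ : ℝ)
    (hLi : 0 < Li) (hγ : 0 ≤ γ)
    (hgrad : ∀ y ∈ Box l u, HasGradientAt f (g y) y)
    (hlip : ∀ y : EuclideanSpace ℝ (Fin n), ∀ t : ℝ, y ∈ Box l u →
      y + t • EuclideanSpace.single i (1:ℝ) ∈ Box l u →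
      |g (y + t • EuclideanSpace.single i (1:ℝ)) i - g y i| ≤ Li * |t|)
    (hx : x ∈ Box l u) (s : ℝ) (hs0 : 0 ≤ s) (hs : s ≤ 2 * |g x i| / (Li + 2 * γ))
    (hfeas : x - (s * Real.sign (g x i)) • EuclideanSpace.single i (1:ℝ) ∈ Box l u) :
    f (x - (s * Real.sign (g x i)) • EuclideanSpace.single i (1:ℝ)) ≤ f x - γ * s ^ 2 := by
  set e : EuclideanSpace ℝ (Fin n) := EuclideanSpace.single i (1:ℝ) with he
  set σ : ℝ := Real.sign (g x i) with hσ
  set G : ℝ := |g x i| with hG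
  have hden : (0:ℝ) < Li + 2 * γ := by linarith
  rcases eq_or_lt_of_le hs0 with h0 | hspos
  · subst h0; simp
  have hGpos : 0 < G := by
    by_contra h
    push_neg at h
    have hG0 : G = 0 := le_antisymm h (abs_nonneg _)
    rw [hG0] at hs
    simp at hs
    nlinarith [hs]
  have hgne : g x i ≠ 0 := by
    intro h; rw [hG, h] at hGpos; simp at hGpos
  have hσabs : |σ| = 1 := by
    rcases lt_trichotomy (g x i) 0 with h | h | h
    · rw [hσ, Real.sign_of_neg h]; simp
    · exact absurd h hgne
    · rw [hσ, Real.sign_of_pos h]; simp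
  have hσg : σ * g x i = G := by
    rcases lt_trichotomy (g x i) 0 with h | h | h
    · rw [hσ, Real.sign_of_neg h, hG, abs_of_neg h]; ring
    · exact absurd h hgne
    · rw [hσ, Real.sign_of_pos h, hG, abs_of_pos h]; ring
  -- the path
  set P : ℝ → EuclideanSpace ℝ (Fin n) := fun t => x + (-(t * σ)) • e with hP
  have hPs : P s = x - (s * σ) • e := by
    rw [hP]; simp [sub_eq_add_neg, neg_smul]
  -- membership of the path in the box
  have hmem : ∀ t ∈ Set.Icc (0:ℝ) s, P t ∈ Box l u := by
    intro t ht j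
    have hfj := hfeas j
    have happ : ∀ (c : ℝ), (x + c • e) j = x j + c * (if j = i then (1:ℝ) else 0) := by
      intro c
      simp [he, EuclideanSpace.single_apply, PiLp.add_apply, PiLp.smul_apply, smul_eq_mul]
    have hfj' : l j ≤ x j + (-(s * σ)) * (if j = i then (1:ℝ) else 0) ∧
        x j + (-(s * σ)) * (if j = i then (1:ℝ) else 0) ≤ u j := by
      have h2 : x - (s * σ) • e = x + (-(s * σ)) • e := by
        simp [sub_eq_add_neg, neg_smul]
      rw [h2, happ] at hfj
      exact hfj
    show l j ≤ (x + (-(t * σ)) • e) j ∧ (x + (-(t * σ)) • e) j ≤ u j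
    rw [happ]
    by_cases hj : j = i
    · simp only [hj, eq_self_iff_true, if_true] at hfj' ⊢
      obtain ⟨ht0, hts⟩ := ht
      obtain ⟨hA, hB⟩ := hfj'
      obtain ⟨hC, hD⟩ := hx i
      generalize x j = a at *
      constructor
      · rcases le_total 0 σ with hσ0 | hσ0
        · nlinarith [mul_le_mul_of_nonneg_right hts hσ0]
        · nlinarith [mul_nonpos_of_nonneg_of_nonpos ht0 hσ0]
      · rcases le_total 0 σ with hσ0 | hσ0
        · nlinarith [mul_nonneg ht0 hσ0]
        · nlinarith [mul_le_mul_of_nonpos_right hts hσ0]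
    · simp only [if_neg hj, mul_zero, add_zero]
      exact hx j
  -- derivative of f along the path
  set d : EuclideanSpace ℝ (Fin n) := (-σ) • e with hd
  have hderiv : ∀ t ∈ Set.Icc (0:ℝ) s, HasDerivAt (fun t => f (P t)) (-σ * g (P t) i) t := by
    intro t ht
    have hmemt := hmem t ht
    have hgrad' := (hgrad (P t) hmemt).hasFDerivAt
    have hpath : HasDerivAt P d t := by
      have h1 : HasDerivAt (fun t : ℝ => x + t • d) ((1:ℝ) • d) t :=
        ((hasDerivAt_id t).smul_const d).const_add x
      rw [one_smul] at h1
      have h2 : P = fun t : ℝ => x + t • d := by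
        funext t; rw [hP, hd, smul_smul]; ring_nf
      rw [h2]
      exact h1
    have hcomp := hgrad'.comp_hasDerivAt t hpath
    have hval : (InnerProductSpace.toDual ℝ _ (g (P t))) d = -σ * g (P t) i := by
      rw [InnerProductSpace.toDual_apply_apply, hd, he]
      rw [real_inner_smul_right, EuclideanSpace.inner_single_right]
      simp [mul_comm]
    rw [hval] at hcomp
    exact hcomp
  -- the auxiliary function
  set φ : ℝ → ℝ := fun t => f (P t) + G * t - Li * t ^ 2 / 2 with hφ
  have hφderiv : ∀ t ∈ Set.Icc (0:ℝ) s,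
      HasDerivAt φ (-σ * g (P t) i + G - Li * t) t := by
    intro t ht
    have h1 := hderiv t ht
    have h2 : HasDerivAt (fun t : ℝ => G * t) G t := by
      simpa using (hasDerivAt_id t).const_mul G
    have h3 : HasDerivAt (fun t : ℝ => Li * t ^ 2 / 2) (Li * t) t := by
      have h4 := ((hasDerivAt_pow 2 t).const_mul Li).div_const 2
      refine h4.congr_deriv ?_
      push_cast
      ring
    exact (h1.add h2).sub h3
  have hanti : AntitoneOn φ (Set.Icc 0 s) := by
    apply antitoneOn_of_deriv_nonpos (convex_Icc 0 s)
    · intro t ht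
      exact (hφderiv t ht).continuousAt.continuousWithinAt
    · intro t ht
      rw [interior_Icc] at ht
      exact (hφderiv t (Set.mem_Icc_of_Ioo ht)).differentiableAt.differentiableWithinAt
    · intro t ht
      rw [interior_Icc] at ht
      have ht' : t ∈ Set.Icc (0:ℝ) s := Set.mem_Icc_of_Ioo ht
      rw [(hφderiv t ht').deriv]
      have hlipt := hlip x (-(t * σ)) hx (hmem t ht')
      have habs : |(-(t * σ))| = t := by
        rw [abs_neg, abs_mul, hσabs, mul_one, abs_of_nonneg ht'.1]
      rw [habs] at hlipt
      have hPt : P t = x + (-(t * σ)) • e := rfl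
      rw [← hPt] at hlipt
      have h2' : (-σ) * (g (P t) i - g x i) ≤ Li * t := by
        calc (-σ) * (g (P t) i - g x i) ≤ |(-σ) * (g (P t) i - g x i)| := le_abs_self _
          _ = |σ| * |g (P t) i - g x i| := by rw [abs_mul, abs_neg]
          _ = |g (P t) i - g x i| := by rw [hσabs, one_mul]
          _ ≤ Li * t := hlipt
      have h1 : -σ * g (P t) i = -(σ * g x i) + (-σ) * (g (P t) i - g x i) := by ring
      rw [hσg] at h1
      linarith [h1 ▸ le_refl (-σ * g (P t) i), h2']
  have hkey : φ s ≤ φ 0 :=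
    hanti (Set.left_mem_Icc.mpr hs0) (Set.right_mem_Icc.mpr hs0) hs0
  have hφ0 : φ 0 = f x := by
    rw [hφ]; simp [hP]
  have hφs : φ s = f (x - (s * σ) • e) + G * s - Li * s ^ 2 / 2 := by
    simp only [hφ]; rw [hPs]
  rw [hφ0, hφs] at hkey
  have hsG : s * (Li + 2 * γ) ≤ 2 * G := by
    rw [div_eq_mul_inv] at hs
    calc s * (Li + 2 * γ) ≤ (2 * G * (Li + 2 * γ)⁻¹) * (Li + 2 * γ) :=
          mul_le_mul_of_nonneg_right hs (le_of_lt hden)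
      _ = 2 * G := by field_simp
  nlinarith [hkey, mul_le_mul_of_nonneg_left hsG hs0]
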